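/- arXiv:2304.06324 — 5 statements merged into one kernel-verified Lean document; each statement's English description precedes it below -/
import Mathlib

section
/- Let (ρ,μ) be an action of a Lie-Yamaguti algebra (g,[·,·]_g,{{·,·,·}}_g) on a Lie-Yamaguti algebra (h,[·,·]_h,{{·,·,·}}_h). Then the direct sum g ⊕ h with operations [x+u, y+v] := [x,y]_g + ρ(x)v − ρ(y)u + [u,v]_h and {{x+u, y+v, z+w}} := {{x,y,z}}_g + D(x,y)w + μ(y,z)u − μ(x,z)v + {{u,v,w}}_h is a Lie-Yamaguti algebra (the semidirect product). -/
/-- A Lie-Yamaguti algebra structure on a `K`-module `V`, given by a bilinear bracket `br`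
and a trilinear bracket `tr`. -/
structure IsLYA (K : Type*) [Field K] (V : Type*) [AddCommGroup V] [Module K V]
    (br : V → V → V) (tr : V → V → V → V) : Prop where
  br_add_left : ∀ x y z : V, br (x + y) z = br x z + br y z
  br_smul_left : ∀ (a : K) (x y : V), br (a • x) y = a • br x y
  br_add_right : ∀ x y z : V, br x (y + z) = br x y + br x z
  br_smul_right : ∀ (a : K) (x y : V), br x (a • y) = a • br x y
  tr_add1 : ∀ x x' y z : V, tr (x + x') y z = tr x y z + tr x' y z
  tr_smul1 : ∀ (a : K) (x y z : V), tr (a • x) y z = a • tr x y z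
  tr_add2 : ∀ x y y' z : V, tr x (y + y') z = tr x y z + tr x y' z
  tr_smul2 : ∀ (a : K) (x y z : V), tr x (a • y) z = a • tr x y z
  tr_add3 : ∀ x y z z' : V, tr x y (z + z') = tr x y z + tr x y z'
  tr_smul3 : ∀ (a : K) (x y z : V), tr x y (a • z) = a • tr x y z
  br_skew : ∀ x y : V, br x y = - br y x
  tr_skew : ∀ x y z : V, tr x y z = - tr y x z
  ly1 : ∀ x y z : V,
    br (br x y) z + br (br y z) x + br (br z x) y + tr x y z + tr y z x + tr z x y = 0
  ly2 : ∀ x y z w : V, tr (br x y) z w + tr (br y z) x w + tr (br z x) y w = 0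
  ly3 : ∀ x y z w : V, tr x y (br z w) = br (tr x y z) w + br z (tr x y w)
  ly4 : ∀ x y z w t : V,
    tr x y (tr z w t) = tr (tr x y z) w t + tr z (tr x y w) t + tr z w (tr x y t)

/-- `D(x,y) = μ(y,x) - μ(x,y) + [ρ(x),ρ(y)] - ρ([x,y])`. -/
def Dmap {g V : Type*} [AddCommGroup V] (br : g → g → g)
    (ρ : g → V → V) (μ : g → g → V → V) (x y : g) (v : V) : V :=
  μ y x v - μ x y v + (ρ x (ρ y v) - ρ y (ρ x v)) - ρ (br x y) v

/-- A representation of a Lie-Yamaguti algebra `(g, br, tr)` on a `K`-module `V`. -/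
structure IsLYRep (K : Type*) [Field K] (g : Type*) [AddCommGroup g] [Module K g]
    (V : Type*) [AddCommGroup V] [Module K V]
    (br : g → g → g) (tr : g → g → g → g)
    (ρ : g → V → V) (μ : g → g → V → V) : Prop where
  ρ_add : ∀ (x y : g) (v : V), ρ (x + y) v = ρ x v + ρ y v
  ρ_smul : ∀ (a : K) (x : g) (v : V), ρ (a • x) v = a • ρ x v
  ρ_addv : ∀ (x : g) (u v : V), ρ x (u + v) = ρ x u + ρ x v
  ρ_smulv : ∀ (x : g) (a : K) (v : V), ρ x (a • v) = a • ρ x v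
  μ_add1 : ∀ (x y z : g) (v : V), μ (x + y) z v = μ x z v + μ y z v
  μ_smul1 : ∀ (a : K) (x y : g) (v : V), μ (a • x) y v = a • μ x y v
  μ_add2 : ∀ (x y z : g) (v : V), μ x (y + z) v = μ x y v + μ x z v
  μ_smul2 : ∀ (a : K) (x y : g) (v : V), μ x (a • y) v = a • μ x y v
  μ_addv : ∀ (x y : g) (u v : V), μ x y (u + v) = μ x y u + μ x y v
  μ_smulv : ∀ (x y : g) (a : K) (v : V), μ x y (a • v) = a • μ x y v
  rep1 : ∀ (x y z : g) (v : V), μ (br x y) z v - μ x z (ρ y v) + μ y z (ρ x v) = 0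
  rep2 : ∀ (x y z : g) (v : V), μ x (br y z) v - ρ y (μ x z v) + ρ z (μ x y v) = 0
  rep3 : ∀ (x y z : g) (v : V),
    ρ (tr x y z) v = Dmap br ρ μ x y (ρ z v) - ρ z (Dmap br ρ μ x y v)
  rep4 : ∀ (x y z w : g) (v : V),
    μ z w (μ x y v) - μ y w (μ x z v) - μ x (tr y z w) v + Dmap br ρ μ y z (μ x w v) = 0
  rep5 : ∀ (x y z w : g) (v : V),
    μ (tr x y z) w v + μ z (tr x y w) v
      = Dmap br ρ μ x y (μ z w v) - μ z w (Dmap br ρ μ x y v)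

/-- An action of a Lie-Yamaguti algebra `(g, brg, trg)` on a Lie-Yamaguti algebra
`(h, brh, trh)`: a representation valued in central elements annihilating all brackets. -/
structure IsLYAction (K : Type*) [Field K] (g : Type*) [AddCommGroup g] [Module K g]
    (h : Type*) [AddCommGroup h] [Module K h]
    (brg : g → g → g) (trg : g → g → g → g)
    (brh : h → h → h) (trh : h → h → h → h)
    (ρ : g → h → h) (μ : g → g → h → h) : Prop where
  rep : IsLYRep K g h brg trg ρ μ
  ρ_cent_br : ∀ (x : g) (u v : h), brh (ρ x u) v = 0
  ρ_cent_tr1 : ∀ (x : g) (u v w : h), trh (ρ x u) v w = 0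
  ρ_cent_tr3 : ∀ (x : g) (u v w : h), trh v w (ρ x u) = 0
  μ_cent_br : ∀ (x y : g) (u v : h), brh (μ x y u) v = 0
  μ_cent_tr1 : ∀ (x y : g) (u v w : h), trh (μ x y u) v w = 0
  μ_cent_tr3 : ∀ (x y : g) (u v w : h), trh v w (μ x y u) = 0
  ρ_ann_br : ∀ (x : g) (u v : h), ρ x (brh u v) = 0
  ρ_ann_tr : ∀ (x : g) (u v w : h), ρ x (trh u v w) = 0
  μ_ann_br : ∀ (x y : g) (u v : h), μ x y (brh u v) = 0
  μ_ann_tr : ∀ (x y : g) (u v w : h), μ x y (trh u v w) = 0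

/-- Relative Rota-Baxter operator of weight 1 from `(h, brh, trh)` to `(g, brg, trg)`
with respect to the action `(ρ, μ)`. -/
def IsRelRB (K : Type*) [Field K] {g h : Type*} [AddCommGroup g] [Module K g]
    [AddCommGroup h] [Module K h]
    (brg : g → g → g) (trg : g → g → g → g)
    (brh : h → h → h) (trh : h → h → h → h)
    (ρ : g → h → h) (μ : g → g → h → h) (T : h →ₗ[K] g) : Prop :=
  (∀ u v : h, brg (T u) (T v) = T (ρ (T u) v - ρ (T v) u + brh u v)) ∧
  (∀ u v w : h, trg (T u) (T v) (T w)
    = T (Dmap brg ρ μ (T u) (T v) w + μ (T v) (T w) u - μ (T u) (T w) v + trh u v w))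

/-- Binary bracket of the semidirect product Lie-Yamaguti algebra `g ⋉ h`. -/
def sdBr {g h : Type*} [AddCommGroup g] [AddCommGroup h]
    (brg : g → g → g) (brh : h → h → h) (ρ : g → h → h) (p q : g × h) : g × h :=
  (brg p.1 q.1, ρ p.1 q.2 - ρ q.1 p.2 + brh p.2 q.2)

/-- Ternary bracket of the semidirect product Lie-Yamaguti algebra `g ⋉ h`. -/
def sdTr {g h : Type*} [AddCommGroup g] [AddCommGroup h]
    (brg : g → g → g) (trg : g → g → g → g) (trh : h → h → h → h)
    (ρ : g → h → h) (μ : g → g → h → h) (p q r : g × h) : g × h :=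
  (trg p.1 q.1 r.1,
    Dmap brg ρ μ p.1 q.1 r.2 + μ q.1 r.1 p.2 - μ p.1 r.1 q.2 + trh p.2 q.2 r.2)

/-- Nijenhuis operator on a Lie-Yamaguti algebra. -/
def IsNijenhuis {V : Type*} [AddCommGroup V]
    (br : V → V → V) (tr : V → V → V → V) (N : V → V) : Prop :=
  (∀ x y : V, br (N x) (N y) = N (br (N x) y + br x (N y) - N (br x y))) ∧
  (∀ x y z : V, tr (N x) (N y) (N z)
    = N (tr (N x) (N y) z + tr (N x) y (N z) + tr x (N y) (N z)
      - N (tr (N x) y z) - N (tr x (N y) z) - N (tr x y (N z)) + N (N (tr x y z))))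

/-- The associator `(x,y,z) = (x*y)*z - x*(y*z)`. -/
def postAssoc {V : Type*} [AddCommGroup V] (star : V → V → V) (x y z : V) : V :=
  star (star x y) z - star x (star y z)

/-- The sub-adjacent binary bracket `[x,y]_C = x*y - y*x + x·y`. -/
def postSubBr {V : Type*} [AddCommGroup V] (dot star : V → V → V) (x y : V) : V :=
  star x y - star y x + dot x y

/-- `{x,y,z}_D = {z,y,x} - {z,x,y} + (y,x,z) - (x,y,z) - (x·y)*z`. -/
def postDbr {V : Type*} [AddCommGroup V] (dot star : V → V → V)
    (curly : V → V → V → V) (x y z : V) : V :=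
  curly z y x - curly z x y + postAssoc star y x z - postAssoc star x y z
    - star (dot x y) z

/-- The sub-adjacent ternary bracket
`{{x,y,z}}_C = {x,y,z}_D + {x,y,z} - {y,x,z} + ⟨x,y,z⟩`. -/
def postSubTr {V : Type*} [AddCommGroup V] (dot star : V → V → V)
    (curly ang : V → V → V → V) (x y z : V) : V :=
  postDbr dot star curly x y z + curly x y z - curly y x z + ang x y z

/-- A post-Lie-Yamaguti algebra structure `(A, ·, *, {·,·,·}, ⟨·,·,·⟩)`. -/
structure IsPostLYA (K : Type*) [Field K] (V : Type*) [AddCommGroup V] [Module K V]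
    (dot star : V → V → V) (curly ang : V → V → V → V) : Prop where
  lya : IsLYA K V dot ang
  star_add_left : ∀ x y z : V, star (x + y) z = star x z + star y z
  star_smul_left : ∀ (a : K) (x y : V), star (a • x) y = a • star x y
  star_add_right : ∀ x y z : V, star x (y + z) = star x y + star x z
  star_smul_right : ∀ (a : K) (x y : V), star x (a • y) = a • star x y
  curly_add1 : ∀ x x' y z : V, curly (x + x') y z = curly x y z + curly x' y z
  curly_smul1 : ∀ (a : K) (x y z : V), curly (a • x) y z = a • curly x y z
  curly_add2 : ∀ x y y' z : V, curly x (y + y') z = curly x y z + curly x y' z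
  curly_smul2 : ∀ (a : K) (x y z : V), curly x (a • y) z = a • curly x y z
  curly_add3 : ∀ x y z z' : V, curly x y (z + z') = curly x y z + curly x y z'
  curly_smul3 : ∀ (a : K) (x y z : V), curly x y (a • z) = a • curly x y z
  post1 : ∀ x y z w : V,
    curly z (postSubBr dot star x y) w = curly (star y z) x w - curly (star x z) y w
  post2 : ∀ x y z w : V,
    curly x y (postSubBr dot star z w) = star z (curly x y w) - star w (curly x y z)
  post3 : ∀ x y z w : V,
    star (postSubTr dot star curly ang x y z) w
      = postDbr dot star curly x y (star z w) - star z (postDbr dot star curly x y w)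
  post4 : ∀ x y z w t : V,
    curly x y (postSubTr dot star curly ang z w t)
      = curly (curly x y z) w t - curly (curly x y w) z t
        + curly z w (postDbr dot star curly x y t)
  post5 : ∀ x y z w t : V,
    curly x y (postDbr dot star curly z w t)
      = curly (postDbr dot star curly x y z) w t
        + curly z (postSubTr dot star curly ang x y w) t
        + curly z w (postSubTr dot star curly ang x y t)
  post6a : ∀ x y z : V, dot (star x y) z = 0
  post6b : ∀ x y z w : V, ang (star x y) z w = 0
  post6c : ∀ x y z w : V, ang z w (star x y) = 0
  post7a : ∀ x y z : V, star x (dot y z) = 0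
  post7b : ∀ x y z w : V, curly (dot x y) z w = 0
  post8a : ∀ x z w t : V, star x (ang z w t) = 0
  post8b : ∀ x y z w t : V, curly (ang z w t) x y = 0

/-- The descent binary bracket `[u,v]_T = ρ(Tu)v - ρ(Tv)u + [u,v]_h`. -/
def brT {K : Type*} [Field K] {g h : Type*} [AddCommGroup g] [Module K g]
    [AddCommGroup h] [Module K h]
    (brh : h → h → h) (ρ : g → h → h) (T : h →ₗ[K] g) (u v : h) : h :=
  ρ (T u) v - ρ (T v) u + brh u v

/-- The descent ternary bracket
`{{u,v,w}}_T = D(Tu,Tv)w + μ(Tv,Tw)u - μ(Tu,Tw)v + {{u,v,w}}_h`. -/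
def trT {K : Type*} [Field K] {g h : Type*} [AddCommGroup g] [Module K g]
    [AddCommGroup h] [Module K h]
    (brg : g → g → g) (trh : h → h → h → h)
    (ρ : g → h → h) (μ : g → g → h → h) (T : h →ₗ[K] g) (u v w : h) : h :=
  Dmap brg ρ μ (T u) (T v) w + μ (T v) (T w) u - μ (T u) (T w) v + trh u v w

/-- `ρ_T(u)(x) = [Tu, x]_g + T(ρ(x)u)`. -/
def rhoT {K : Type*} [Field K] {g h : Type*} [AddCommGroup g] [Module K g]
    [AddCommGroup h] [Module K h]
    (brg : g → g → g) (ρ : g → h → h) (T : h →ₗ[K] g) (u : h) (x : g) : g :=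
  brg (T u) x + T (ρ x u)

/-- `μ_T(u,v)(x) = {{x,Tu,Tv}}_g - T(D(x,Tu)v - μ(x,Tv)u)`. -/
def muT {K : Type*} [Field K] {g h : Type*} [AddCommGroup g] [Module K g]
    [AddCommGroup h] [Module K h]
    (brg : g → g → g) (trg : g → g → g → g)
    (ρ : g → h → h) (μ : g → g → h → h) (T : h →ₗ[K] g) (u v : h) (x : g) : g :=
  trg x (T u) (T v) - T (Dmap brg ρ μ x (T u) v - μ x (T v) u)

/-- `D_T(u,v)(x) = {{Tu,Tv,x}}_g - T(μ(Tv,x)u - μ(Tu,x)v)`. -/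
def DT {K : Type*} [Field K] {g h : Type*} [AddCommGroup g] [Module K g]
    [AddCommGroup h] [Module K h]
    (trg : g → g → g → g) (μ : g → g → h → h) (T : h →ₗ[K] g) (u v : h) (x : g) : g :=
  trg (T u) (T v) x - T (μ (T v) x u - μ (T u) x v)


private theorem sdaux_zero {A B : Type*} [AddGroup A] [AddGroup B] (f : A → B)
    (hf : ∀ a b, f (a + b) = f a + f b) : f 0 = 0 := by
  have h0 := hf 0 0
  rw [add_zero] at h0
  exact (left_eq_add.mp h0)

private theorem sdaux_neg {A B : Type*} [AddGroup A] [AddGroup B] (f : A → B)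
    (hf : ∀ a b, f (a + b) = f a + f b) (a : A) : f (-a) = - f a := by
  have h1 : f a + f (-a) = 0 := by rw [← hf, add_neg_cancel, sdaux_zero f hf]
  exact eq_neg_of_add_eq_zero_right h1

private theorem sdaux_sub {A B : Type*} [AddGroup A] [AddGroup B] (f : A → B)
    (hf : ∀ a b, f (a + b) = f a + f b) (a b : A) : f (a - b) = f a - f b := by
  rw [sub_eq_add_neg, hf, sdaux_neg f hf, sub_eq_add_neg]

/-- the semidirect product `g ⋉_{ρ,μ} h` of an action is a
Lie-Yamaguti algebra. -/
theorem semidirect_product_isLYA (K : Type*) [Field K]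
    (g : Type*) [AddCommGroup g] [Module K g] (h : Type*) [AddCommGroup h] [Module K h]
    (brg : g → g → g) (trg : g → g → g → g) (brh : h → h → h) (trh : h → h → h → h)
    (ρ : g → h → h) (μ : g → g → h → h)
    (hg : IsLYA K g brg trg) (hh : IsLYA K h brh trh)
    (hact : IsLYAction K g h brg trg brh trh ρ μ) :
    IsLYA K (g × h) (sdBr brg brh ρ) (sdTr brg trg trh ρ μ) := by
  have hrep := hact.rep
  have rgs : ∀ (x y : g) (w : h), ρ (x - y) w = ρ x w - ρ y w :=
    fun x y w => sdaux_sub (fun a => ρ a w) (fun a b => hrep.ρ_add a b w) x y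
  have rgn : ∀ (x : g) (w : h), ρ (-x) w = - ρ x w :=
    fun x w => sdaux_neg (fun a => ρ a w) (fun a b => hrep.ρ_add a b w) x
  have rg0 : ∀ w : h, ρ (0 : g) w = 0 :=
    fun w => sdaux_zero (fun a => ρ a w) (fun a b => hrep.ρ_add a b w)
  have rvs : ∀ (x : g) (a b : h), ρ x (a - b) = ρ x a - ρ x b :=
    fun x a b => sdaux_sub (ρ x) (hrep.ρ_addv x) a b
  have rvn : ∀ (x : g) (a : h), ρ x (-a) = - ρ x a :=
    fun x a => sdaux_neg (ρ x) (hrep.ρ_addv x) a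
  have rv0 : ∀ x : g, ρ x (0 : h) = 0 :=
    fun x => sdaux_zero (ρ x) (hrep.ρ_addv x)
  have m1s : ∀ (x x' y : g) (v : h), μ (x - x') y v = μ x y v - μ x' y v :=
    fun x x' y v => sdaux_sub (fun a => μ a y v) (fun a b => hrep.μ_add1 a b y v) x x'
  have m2s : ∀ (x y y' : g) (v : h), μ x (y - y') v = μ x y v - μ x y' v :=
    fun x y y' v => sdaux_sub (fun a => μ x a v) (fun a b => hrep.μ_add2 x a b v) y y'
  have mvs : ∀ (x y : g) (a b : h), μ x y (a - b) = μ x y a - μ x y b :=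
    fun x y a b => sdaux_sub (μ x y) (hrep.μ_addv x y) a b
  have mv0 : ∀ x y : g, μ x y (0 : h) = 0 :=
    fun x y => sdaux_zero (μ x y) (hrep.μ_addv x y)
  have bs1 : ∀ a b c : h, brh (a - b) c = brh a c - brh b c :=
    fun a b c => sdaux_sub (fun x => brh x c) (fun x y => hh.br_add_left x y c) a b
  have bs2 : ∀ a b c : h, brh a (b - c) = brh a b - brh a c :=
    fun a b c => sdaux_sub (brh a) (fun x y => hh.br_add_right a x y) b c
  have b01 : ∀ a : h, brh 0 a = 0 :=
    fun a => sdaux_zero (fun x => brh x a) (fun x y => hh.br_add_left x y a)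
  have b02 : ∀ a : h, brh a 0 = 0 :=
    fun a => sdaux_zero (brh a) (fun x y => hh.br_add_right a x y)
  have ts1 : ∀ a b c d : h, trh (a - b) c d = trh a c d - trh b c d :=
    fun a b c d => sdaux_sub (fun x => trh x c d) (fun x y => hh.tr_add1 x y c d) a b
  have ts2 : ∀ a b c d : h, trh a (b - c) d = trh a b d - trh a c d :=
    fun a b c d => sdaux_sub (fun x => trh a x d) (fun x y => hh.tr_add2 a x y d) b c
  have ts3 : ∀ a b c d : h, trh a b (c - d) = trh a b c - trh a b d :=
    fun a b c d => sdaux_sub (trh a b) (fun x y => hh.tr_add3 a b x y) c d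
  have t01 : ∀ a b : h, trh 0 a b = 0 :=
    fun a b => sdaux_zero (fun x => trh x a b) (fun x y => hh.tr_add1 x y a b)
  have t02 : ∀ a b : h, trh a 0 b = 0 :=
    fun a b => sdaux_zero (fun x => trh a x b) (fun x y => hh.tr_add2 a x y b)
  have t03 : ∀ a b : h, trh a b 0 = 0 :=
    fun a b => sdaux_zero (trh a b) (fun x y => hh.tr_add3 a b x y)
  have zb2ρ : ∀ (x : g) (u v : h), brh v (ρ x u) = 0 := by
    intro x u v; rw [hh.br_skew, hact.ρ_cent_br, neg_zero]
  have zb2μ : ∀ (x y : g) (u v : h), brh v (μ x y u) = 0 := by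
    intro x y u v; rw [hh.br_skew, hact.μ_cent_br, neg_zero]
  have zt2ρ : ∀ (x : g) (u v w : h), trh v (ρ x u) w = 0 := by
    intro x u v w; rw [hh.tr_skew, hact.ρ_cent_tr1, neg_zero]
  have zt2μ : ∀ (x y : g) (u v w : h), trh v (μ x y u) w = 0 := by
    intro x y u v w; rw [hh.tr_skew, hact.μ_cent_tr1, neg_zero]
  constructor
  case br_add_left =>
    rintro ⟨x,u⟩ ⟨x',u'⟩ ⟨y,v⟩
    refine Prod.ext ?_ ?_ <;> simp only [sdBr, sdTr, Dmap, hrep.ρ_add, hrep.ρ_addv, hrep.μ_add1, hrep.μ_add2, hrep.μ_addv,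
      hh.br_add_left, hh.br_add_right, hh.tr_add1, hh.tr_add2, hh.tr_add3,
      hg.br_add_left, hg.br_add_right,
      rgs, rgn, rg0, rvs, rvn, rv0, m1s, m2s, mvs, mv0, bs1, bs2, b01, b02,
      ts1, ts2, ts3, t01, t02, t03,
      hact.ρ_cent_br, hact.μ_cent_br, zb2ρ, zb2μ,
      hact.ρ_cent_tr1, hact.μ_cent_tr1, zt2ρ, zt2μ,
      hact.ρ_cent_tr3, hact.μ_cent_tr3,
      hact.ρ_ann_br, hact.ρ_ann_tr, hact.μ_ann_br, hact.μ_ann_tr,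
      Prod.mk_add_mk, Prod.fst_zero, Prod.snd_zero, Prod.fst_neg, Prod.snd_neg,
      Prod.neg_mk, Prod.smul_mk, smul_add, smul_sub,
      hrep.ρ_smul, hrep.ρ_smulv, hrep.μ_smul1, hrep.μ_smul2, hrep.μ_smulv,
      hh.br_smul_left, hh.br_smul_right, hh.tr_smul1, hh.tr_smul2, hh.tr_smul3,
      hg.br_smul_left, hg.br_smul_right,
      hg.tr_add1, hg.tr_add2, hg.tr_add3, hg.tr_smul1, hg.tr_smul2, hg.tr_smul3,
      add_zero, zero_add, sub_zero, zero_sub, neg_zero, neg_neg, sub_self] <;> first | rfl | abel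
  case br_smul_left =>
    rintro a ⟨x,u⟩ ⟨y,v⟩
    refine Prod.ext ?_ ?_ <;> simp only [sdBr, sdTr, Dmap, hrep.ρ_add, hrep.ρ_addv, hrep.μ_add1, hrep.μ_add2, hrep.μ_addv,
      hh.br_add_left, hh.br_add_right, hh.tr_add1, hh.tr_add2, hh.tr_add3,
      hg.br_add_left, hg.br_add_right,
      rgs, rgn, rg0, rvs, rvn, rv0, m1s, m2s, mvs, mv0, bs1, bs2, b01, b02,
      ts1, ts2, ts3, t01, t02, t03,
      hact.ρ_cent_br, hact.μ_cent_br, zb2ρ, zb2μ,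
      hact.ρ_cent_tr1, hact.μ_cent_tr1, zt2ρ, zt2μ,
      hact.ρ_cent_tr3, hact.μ_cent_tr3,
      hact.ρ_ann_br, hact.ρ_ann_tr, hact.μ_ann_br, hact.μ_ann_tr,
      Prod.mk_add_mk, Prod.fst_zero, Prod.snd_zero, Prod.fst_neg, Prod.snd_neg,
      Prod.neg_mk, Prod.smul_mk, smul_add, smul_sub,
      hrep.ρ_smul, hrep.ρ_smulv, hrep.μ_smul1, hrep.μ_smul2, hrep.μ_smulv,
      hh.br_smul_left, hh.br_smul_right, hh.tr_smul1, hh.tr_smul2, hh.tr_smul3,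
      hg.br_smul_left, hg.br_smul_right,
      hg.tr_add1, hg.tr_add2, hg.tr_add3, hg.tr_smul1, hg.tr_smul2, hg.tr_smul3,
      add_zero, zero_add, sub_zero, zero_sub, neg_zero, neg_neg, sub_self] <;> first | rfl | abel
  case br_add_right =>
    rintro ⟨x,u⟩ ⟨y,v⟩ ⟨y',v'⟩
    refine Prod.ext ?_ ?_ <;> simp only [sdBr, sdTr, Dmap, hrep.ρ_add, hrep.ρ_addv, hrep.μ_add1, hrep.μ_add2, hrep.μ_addv,
      hh.br_add_left, hh.br_add_right, hh.tr_add1, hh.tr_add2, hh.tr_add3,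
      hg.br_add_left, hg.br_add_right,
      rgs, rgn, rg0, rvs, rvn, rv0, m1s, m2s, mvs, mv0, bs1, bs2, b01, b02,
      ts1, ts2, ts3, t01, t02, t03,
      hact.ρ_cent_br, hact.μ_cent_br, zb2ρ, zb2μ,
      hact.ρ_cent_tr1, hact.μ_cent_tr1, zt2ρ, zt2μ,
      hact.ρ_cent_tr3, hact.μ_cent_tr3,
      hact.ρ_ann_br, hact.ρ_ann_tr, hact.μ_ann_br, hact.μ_ann_tr,
      Prod.mk_add_mk, Prod.fst_zero, Prod.snd_zero, Prod.fst_neg, Prod.snd_neg,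
      Prod.neg_mk, Prod.smul_mk, smul_add, smul_sub,
      hrep.ρ_smul, hrep.ρ_smulv, hrep.μ_smul1, hrep.μ_smul2, hrep.μ_smulv,
      hh.br_smul_left, hh.br_smul_right, hh.tr_smul1, hh.tr_smul2, hh.tr_smul3,
      hg.br_smul_left, hg.br_smul_right,
      hg.tr_add1, hg.tr_add2, hg.tr_add3, hg.tr_smul1, hg.tr_smul2, hg.tr_smul3,
      add_zero, zero_add, sub_zero, zero_sub, neg_zero, neg_neg, sub_self] <;> first | rfl | abel
  case br_smul_right =>
    rintro a ⟨x,u⟩ ⟨y,v⟩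
    refine Prod.ext ?_ ?_ <;> simp only [sdBr, sdTr, Dmap, hrep.ρ_add, hrep.ρ_addv, hrep.μ_add1, hrep.μ_add2, hrep.μ_addv,
      hh.br_add_left, hh.br_add_right, hh.tr_add1, hh.tr_add2, hh.tr_add3,
      hg.br_add_left, hg.br_add_right,
      rgs, rgn, rg0, rvs, rvn, rv0, m1s, m2s, mvs, mv0, bs1, bs2, b01, b02,
      ts1, ts2, ts3, t01, t02, t03,
      hact.ρ_cent_br, hact.μ_cent_br, zb2ρ, zb2μ,
      hact.ρ_cent_tr1, hact.μ_cent_tr1, zt2ρ, zt2μ,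
      hact.ρ_cent_tr3, hact.μ_cent_tr3,
      hact.ρ_ann_br, hact.ρ_ann_tr, hact.μ_ann_br, hact.μ_ann_tr,
      Prod.mk_add_mk, Prod.fst_zero, Prod.snd_zero, Prod.fst_neg, Prod.snd_neg,
      Prod.neg_mk, Prod.smul_mk, smul_add, smul_sub,
      hrep.ρ_smul, hrep.ρ_smulv, hrep.μ_smul1, hrep.μ_smul2, hrep.μ_smulv,
      hh.br_smul_left, hh.br_smul_right, hh.tr_smul1, hh.tr_smul2, hh.tr_smul3,
      hg.br_smul_left, hg.br_smul_right,
      hg.tr_add1, hg.tr_add2, hg.tr_add3, hg.tr_smul1, hg.tr_smul2, hg.tr_smul3,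
      add_zero, zero_add, sub_zero, zero_sub, neg_zero, neg_neg, sub_self] <;> first | rfl | abel
  case tr_add1 =>
    rintro ⟨x,u⟩ ⟨x',u'⟩ ⟨y,v⟩ ⟨z,w⟩
    refine Prod.ext ?_ ?_ <;> simp only [sdBr, sdTr, Dmap, hrep.ρ_add, hrep.ρ_addv, hrep.μ_add1, hrep.μ_add2, hrep.μ_addv,
      hh.br_add_left, hh.br_add_right, hh.tr_add1, hh.tr_add2, hh.tr_add3,
      hg.br_add_left, hg.br_add_right,
      rgs, rgn, rg0, rvs, rvn, rv0, m1s, m2s, mvs, mv0, bs1, bs2, b01, b02,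
      ts1, ts2, ts3, t01, t02, t03,
      hact.ρ_cent_br, hact.μ_cent_br, zb2ρ, zb2μ,
      hact.ρ_cent_tr1, hact.μ_cent_tr1, zt2ρ, zt2μ,
      hact.ρ_cent_tr3, hact.μ_cent_tr3,
      hact.ρ_ann_br, hact.ρ_ann_tr, hact.μ_ann_br, hact.μ_ann_tr,
      Prod.mk_add_mk, Prod.fst_zero, Prod.snd_zero, Prod.fst_neg, Prod.snd_neg,
      Prod.neg_mk, Prod.smul_mk, smul_add, smul_sub,
      hrep.ρ_smul, hrep.ρ_smulv, hrep.μ_smul1, hrep.μ_smul2, hrep.μ_smulv,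
      hh.br_smul_left, hh.br_smul_right, hh.tr_smul1, hh.tr_smul2, hh.tr_smul3,
      hg.br_smul_left, hg.br_smul_right,
      hg.tr_add1, hg.tr_add2, hg.tr_add3, hg.tr_smul1, hg.tr_smul2, hg.tr_smul3,
      add_zero, zero_add, sub_zero, zero_sub, neg_zero, neg_neg, sub_self] <;> first | rfl | abel
  case tr_smul1 =>
    rintro a ⟨x,u⟩ ⟨y,v⟩ ⟨z,w⟩
    refine Prod.ext ?_ ?_ <;> simp only [sdBr, sdTr, Dmap, hrep.ρ_add, hrep.ρ_addv, hrep.μ_add1, hrep.μ_add2, hrep.μ_addv,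
      hh.br_add_left, hh.br_add_right, hh.tr_add1, hh.tr_add2, hh.tr_add3,
      hg.br_add_left, hg.br_add_right,
      rgs, rgn, rg0, rvs, rvn, rv0, m1s, m2s, mvs, mv0, bs1, bs2, b01, b02,
      ts1, ts2, ts3, t01, t02, t03,
      hact.ρ_cent_br, hact.μ_cent_br, zb2ρ, zb2μ,
      hact.ρ_cent_tr1, hact.μ_cent_tr1, zt2ρ, zt2μ,
      hact.ρ_cent_tr3, hact.μ_cent_tr3,
      hact.ρ_ann_br, hact.ρ_ann_tr, hact.μ_ann_br, hact.μ_ann_tr,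
      Prod.mk_add_mk, Prod.fst_zero, Prod.snd_zero, Prod.fst_neg, Prod.snd_neg,
      Prod.neg_mk, Prod.smul_mk, smul_add, smul_sub,
      hrep.ρ_smul, hrep.ρ_smulv, hrep.μ_smul1, hrep.μ_smul2, hrep.μ_smulv,
      hh.br_smul_left, hh.br_smul_right, hh.tr_smul1, hh.tr_smul2, hh.tr_smul3,
      hg.br_smul_left, hg.br_smul_right,
      hg.tr_add1, hg.tr_add2, hg.tr_add3, hg.tr_smul1, hg.tr_smul2, hg.tr_smul3,
      add_zero, zero_add, sub_zero, zero_sub, neg_zero, neg_neg, sub_self] <;> first | rfl | abel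
  case tr_add2 =>
    rintro ⟨x,u⟩ ⟨y,v⟩ ⟨y',v'⟩ ⟨z,w⟩
    refine Prod.ext ?_ ?_ <;> simp only [sdBr, sdTr, Dmap, hrep.ρ_add, hrep.ρ_addv, hrep.μ_add1, hrep.μ_add2, hrep.μ_addv,
      hh.br_add_left, hh.br_add_right, hh.tr_add1, hh.tr_add2, hh.tr_add3,
      hg.br_add_left, hg.br_add_right,
      rgs, rgn, rg0, rvs, rvn, rv0, m1s, m2s, mvs, mv0, bs1, bs2, b01, b02,
      ts1, ts2, ts3, t01, t02, t03,
      hact.ρ_cent_br, hact.μ_cent_br, zb2ρ, zb2μ,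
      hact.ρ_cent_tr1, hact.μ_cent_tr1, zt2ρ, zt2μ,
      hact.ρ_cent_tr3, hact.μ_cent_tr3,
      hact.ρ_ann_br, hact.ρ_ann_tr, hact.μ_ann_br, hact.μ_ann_tr,
      Prod.mk_add_mk, Prod.fst_zero, Prod.snd_zero, Prod.fst_neg, Prod.snd_neg,
      Prod.neg_mk, Prod.smul_mk, smul_add, smul_sub,
      hrep.ρ_smul, hrep.ρ_smulv, hrep.μ_smul1, hrep.μ_smul2, hrep.μ_smulv,
      hh.br_smul_left, hh.br_smul_right, hh.tr_smul1, hh.tr_smul2, hh.tr_smul3,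
      hg.br_smul_left, hg.br_smul_right,
      hg.tr_add1, hg.tr_add2, hg.tr_add3, hg.tr_smul1, hg.tr_smul2, hg.tr_smul3,
      add_zero, zero_add, sub_zero, zero_sub, neg_zero, neg_neg, sub_self] <;> first | rfl | abel
  case tr_smul2 =>
    rintro a ⟨x,u⟩ ⟨y,v⟩ ⟨z,w⟩
    refine Prod.ext ?_ ?_ <;> simp only [sdBr, sdTr, Dmap, hrep.ρ_add, hrep.ρ_addv, hrep.μ_add1, hrep.μ_add2, hrep.μ_addv,
      hh.br_add_left, hh.br_add_right, hh.tr_add1, hh.tr_add2, hh.tr_add3,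
      hg.br_add_left, hg.br_add_right,
      rgs, rgn, rg0, rvs, rvn, rv0, m1s, m2s, mvs, mv0, bs1, bs2, b01, b02,
      ts1, ts2, ts3, t01, t02, t03,
      hact.ρ_cent_br, hact.μ_cent_br, zb2ρ, zb2μ,
      hact.ρ_cent_tr1, hact.μ_cent_tr1, zt2ρ, zt2μ,
      hact.ρ_cent_tr3, hact.μ_cent_tr3,
      hact.ρ_ann_br, hact.ρ_ann_tr, hact.μ_ann_br, hact.μ_ann_tr,
      Prod.mk_add_mk, Prod.fst_zero, Prod.snd_zero, Prod.fst_neg, Prod.snd_neg,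
      Prod.neg_mk, Prod.smul_mk, smul_add, smul_sub,
      hrep.ρ_smul, hrep.ρ_smulv, hrep.μ_smul1, hrep.μ_smul2, hrep.μ_smulv,
      hh.br_smul_left, hh.br_smul_right, hh.tr_smul1, hh.tr_smul2, hh.tr_smul3,
      hg.br_smul_left, hg.br_smul_right,
      hg.tr_add1, hg.tr_add2, hg.tr_add3, hg.tr_smul1, hg.tr_smul2, hg.tr_smul3,
      add_zero, zero_add, sub_zero, zero_sub, neg_zero, neg_neg, sub_self] <;> first | rfl | abel
  case tr_add3 =>
    rintro ⟨x,u⟩ ⟨y,v⟩ ⟨z,w⟩ ⟨z',w'⟩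
    refine Prod.ext ?_ ?_ <;> simp only [sdBr, sdTr, Dmap, hrep.ρ_add, hrep.ρ_addv, hrep.μ_add1, hrep.μ_add2, hrep.μ_addv,
      hh.br_add_left, hh.br_add_right, hh.tr_add1, hh.tr_add2, hh.tr_add3,
      hg.br_add_left, hg.br_add_right,
      rgs, rgn, rg0, rvs, rvn, rv0, m1s, m2s, mvs, mv0, bs1, bs2, b01, b02,
      ts1, ts2, ts3, t01, t02, t03,
      hact.ρ_cent_br, hact.μ_cent_br, zb2ρ, zb2μ,
      hact.ρ_cent_tr1, hact.μ_cent_tr1, zt2ρ, zt2μ,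
      hact.ρ_cent_tr3, hact.μ_cent_tr3,
      hact.ρ_ann_br, hact.ρ_ann_tr, hact.μ_ann_br, hact.μ_ann_tr,
      Prod.mk_add_mk, Prod.fst_zero, Prod.snd_zero, Prod.fst_neg, Prod.snd_neg,
      Prod.neg_mk, Prod.smul_mk, smul_add, smul_sub,
      hrep.ρ_smul, hrep.ρ_smulv, hrep.μ_smul1, hrep.μ_smul2, hrep.μ_smulv,
      hh.br_smul_left, hh.br_smul_right, hh.tr_smul1, hh.tr_smul2, hh.tr_smul3,
      hg.br_smul_left, hg.br_smul_right,
      hg.tr_add1, hg.tr_add2, hg.tr_add3, hg.tr_smul1, hg.tr_smul2, hg.tr_smul3,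
      add_zero, zero_add, sub_zero, zero_sub, neg_zero, neg_neg, sub_self] <;> first | rfl | abel
  case tr_smul3 =>
    rintro a ⟨x,u⟩ ⟨y,v⟩ ⟨z,w⟩
    refine Prod.ext ?_ ?_ <;> simp only [sdBr, sdTr, Dmap, hrep.ρ_add, hrep.ρ_addv, hrep.μ_add1, hrep.μ_add2, hrep.μ_addv,
      hh.br_add_left, hh.br_add_right, hh.tr_add1, hh.tr_add2, hh.tr_add3,
      hg.br_add_left, hg.br_add_right,
      rgs, rgn, rg0, rvs, rvn, rv0, m1s, m2s, mvs, mv0, bs1, bs2, b01, b02,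
      ts1, ts2, ts3, t01, t02, t03,
      hact.ρ_cent_br, hact.μ_cent_br, zb2ρ, zb2μ,
      hact.ρ_cent_tr1, hact.μ_cent_tr1, zt2ρ, zt2μ,
      hact.ρ_cent_tr3, hact.μ_cent_tr3,
      hact.ρ_ann_br, hact.ρ_ann_tr, hact.μ_ann_br, hact.μ_ann_tr,
      Prod.mk_add_mk, Prod.fst_zero, Prod.snd_zero, Prod.fst_neg, Prod.snd_neg,
      Prod.neg_mk, Prod.smul_mk, smul_add, smul_sub,
      hrep.ρ_smul, hrep.ρ_smulv, hrep.μ_smul1, hrep.μ_smul2, hrep.μ_smulv,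
      hh.br_smul_left, hh.br_smul_right, hh.tr_smul1, hh.tr_smul2, hh.tr_smul3,
      hg.br_smul_left, hg.br_smul_right,
      hg.tr_add1, hg.tr_add2, hg.tr_add3, hg.tr_smul1, hg.tr_smul2, hg.tr_smul3,
      add_zero, zero_add, sub_zero, zero_sub, neg_zero, neg_neg, sub_self] <;> first | rfl | abel
  case br_skew =>
    rintro ⟨x,u⟩ ⟨y,v⟩
    refine Prod.ext ?_ ?_
    · exact hg.br_skew x y
    · show ρ x v - ρ y u + brh u v = (-(sdBr brg brh ρ (y,v) (x,u))).2
      simp only [sdBr, Prod.snd_neg]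
      linear_combination (norm := abel) hh.br_skew u v
  case tr_skew =>
    rintro ⟨x,u⟩ ⟨y,v⟩ ⟨z,w⟩
    refine Prod.ext ?_ ?_
    · exact hg.tr_skew x y z
    · show (sdTr brg trg trh ρ μ (x,u) (y,v) (z,w)).2
        = (-(sdTr brg trg trh ρ μ (y,v) (x,u) (z,w))).2
      linear_combination (norm := (simp only [sdBr, sdTr, Dmap, hrep.ρ_add, hrep.ρ_addv, hrep.μ_add1, hrep.μ_add2, hrep.μ_addv,
      hh.br_add_left, hh.br_add_right, hh.tr_add1, hh.tr_add2, hh.tr_add3,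
      hg.br_add_left, hg.br_add_right,
      rgs, rgn, rg0, rvs, rvn, rv0, m1s, m2s, mvs, mv0, bs1, bs2, b01, b02,
      ts1, ts2, ts3, t01, t02, t03,
      hact.ρ_cent_br, hact.μ_cent_br, zb2ρ, zb2μ,
      hact.ρ_cent_tr1, hact.μ_cent_tr1, zt2ρ, zt2μ,
      hact.ρ_cent_tr3, hact.μ_cent_tr3,
      hact.ρ_ann_br, hact.ρ_ann_tr, hact.μ_ann_br, hact.μ_ann_tr,
      Prod.mk_add_mk, Prod.fst_zero, Prod.snd_zero, Prod.fst_neg, Prod.snd_neg,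
      Prod.neg_mk, Prod.smul_mk, smul_add, smul_sub,
      hrep.ρ_smul, hrep.ρ_smulv, hrep.μ_smul1, hrep.μ_smul2, hrep.μ_smulv,
      hh.br_smul_left, hh.br_smul_right, hh.tr_smul1, hh.tr_smul2, hh.tr_smul3,
      hg.br_smul_left, hg.br_smul_right,
      hg.tr_add1, hg.tr_add2, hg.tr_add3, hg.tr_smul1, hg.tr_smul2, hg.tr_smul3,
      add_zero, zero_add, sub_zero, zero_sub, neg_zero, neg_neg, sub_self] <;> abel))
        hh.tr_skew u v w - congrArg (fun a => ρ a w) (hg.br_skew x y)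
  case ly1 =>
    rintro ⟨x,u⟩ ⟨y,v⟩ ⟨z,w⟩
    refine Prod.ext ?_ ?_
    · simp only [sdBr, sdTr, Prod.mk_add_mk, Prod.fst_zero]
      exact hg.ly1 x y z
    · linear_combination (norm := (simp only [sdBr, sdTr, Dmap, hrep.ρ_add, hrep.ρ_addv, hrep.μ_add1, hrep.μ_add2, hrep.μ_addv,
      hh.br_add_left, hh.br_add_right, hh.tr_add1, hh.tr_add2, hh.tr_add3,
      hg.br_add_left, hg.br_add_right,
      rgs, rgn, rg0, rvs, rvn, rv0, m1s, m2s, mvs, mv0, bs1, bs2, b01, b02,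
      ts1, ts2, ts3, t01, t02, t03,
      hact.ρ_cent_br, hact.μ_cent_br, zb2ρ, zb2μ,
      hact.ρ_cent_tr1, hact.μ_cent_tr1, zt2ρ, zt2μ,
      hact.ρ_cent_tr3, hact.μ_cent_tr3,
      hact.ρ_ann_br, hact.ρ_ann_tr, hact.μ_ann_br, hact.μ_ann_tr,
      Prod.mk_add_mk, Prod.fst_zero, Prod.snd_zero, Prod.fst_neg, Prod.snd_neg,
      Prod.neg_mk, Prod.smul_mk, smul_add, smul_sub,
      hrep.ρ_smul, hrep.ρ_smulv, hrep.μ_smul1, hrep.μ_smul2, hrep.μ_smulv,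
      hh.br_smul_left, hh.br_smul_right, hh.tr_smul1, hh.tr_smul2, hh.tr_smul3,
      hg.br_smul_left, hg.br_smul_right,
      hg.tr_add1, hg.tr_add2, hg.tr_add3, hg.tr_smul1, hg.tr_smul2, hg.tr_smul3,
      add_zero, zero_add, sub_zero, zero_sub, neg_zero, neg_neg, sub_self] <;> abel)) hh.ly1 u v w
  case ly2 =>
    rintro ⟨x,u⟩ ⟨y,v⟩ ⟨z,w⟩ ⟨t,m⟩
    refine Prod.ext ?_ ?_
    · simp only [sdBr, sdTr, Prod.mk_add_mk, Prod.fst_zero]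
      exact hg.ly2 x y z t
    · linear_combination (norm := (simp only [sdBr, sdTr, Dmap, hrep.ρ_add, hrep.ρ_addv, hrep.μ_add1, hrep.μ_add2, hrep.μ_addv,
      hh.br_add_left, hh.br_add_right, hh.tr_add1, hh.tr_add2, hh.tr_add3,
      hg.br_add_left, hg.br_add_right,
      rgs, rgn, rg0, rvs, rvn, rv0, m1s, m2s, mvs, mv0, bs1, bs2, b01, b02,
      ts1, ts2, ts3, t01, t02, t03,
      hact.ρ_cent_br, hact.μ_cent_br, zb2ρ, zb2μ,
      hact.ρ_cent_tr1, hact.μ_cent_tr1, zt2ρ, zt2μ,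
      hact.ρ_cent_tr3, hact.μ_cent_tr3,
      hact.ρ_ann_br, hact.ρ_ann_tr, hact.μ_ann_br, hact.μ_ann_tr,
      Prod.mk_add_mk, Prod.fst_zero, Prod.snd_zero, Prod.fst_neg, Prod.snd_neg,
      Prod.neg_mk, Prod.smul_mk, smul_add, smul_sub,
      hrep.ρ_smul, hrep.ρ_smulv, hrep.μ_smul1, hrep.μ_smul2, hrep.μ_smulv,
      hh.br_smul_left, hh.br_smul_right, hh.tr_smul1, hh.tr_smul2, hh.tr_smul3,
      hg.br_smul_left, hg.br_smul_right,
      hg.tr_add1, hg.tr_add2, hg.tr_add3, hg.tr_smul1, hg.tr_smul2, hg.tr_smul3,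
      add_zero, zero_add, sub_zero, zero_sub, neg_zero, neg_neg, sub_self] <;> abel))
        hrep.rep2 z x y m + hrep.rep2 x y z m + hrep.rep2 y z x m
        - hrep.rep1 x y z m - hrep.rep1 y z x m - hrep.rep1 z x y m
        - hrep.rep1 x y t w - hrep.rep1 y z t u - hrep.rep1 z x t v
        - congrArg (fun a => ρ a m) (hg.ly1 x y z)
        + hrep.rep3 x y z m + hrep.rep3 y z x m + hrep.rep3 z x y m
        + hh.ly2 u v w m
  case ly3 =>
    rintro ⟨x,u⟩ ⟨y,v⟩ ⟨z,w⟩ ⟨t,m⟩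
    refine Prod.ext ?_ ?_
    · simp only [sdBr, sdTr, Prod.mk_add_mk]
      exact hg.ly3 x y z t
    · linear_combination (norm := (simp only [sdBr, sdTr, Dmap, hrep.ρ_add, hrep.ρ_addv, hrep.μ_add1, hrep.μ_add2, hrep.μ_addv,
      hh.br_add_left, hh.br_add_right, hh.tr_add1, hh.tr_add2, hh.tr_add3,
      hg.br_add_left, hg.br_add_right,
      rgs, rgn, rg0, rvs, rvn, rv0, m1s, m2s, mvs, mv0, bs1, bs2, b01, b02,
      ts1, ts2, ts3, t01, t02, t03,
      hact.ρ_cent_br, hact.μ_cent_br, zb2ρ, zb2μ,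
      hact.ρ_cent_tr1, hact.μ_cent_tr1, zt2ρ, zt2μ,
      hact.ρ_cent_tr3, hact.μ_cent_tr3,
      hact.ρ_ann_br, hact.ρ_ann_tr, hact.μ_ann_br, hact.μ_ann_tr,
      Prod.mk_add_mk, Prod.fst_zero, Prod.snd_zero, Prod.fst_neg, Prod.snd_neg,
      Prod.neg_mk, Prod.smul_mk, smul_add, smul_sub,
      hrep.ρ_smul, hrep.ρ_smulv, hrep.μ_smul1, hrep.μ_smul2, hrep.μ_smulv,
      hh.br_smul_left, hh.br_smul_right, hh.tr_smul1, hh.tr_smul2, hh.tr_smul3,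
      hg.br_smul_left, hg.br_smul_right,
      hg.tr_add1, hg.tr_add2, hg.tr_add3, hg.tr_smul1, hg.tr_smul2, hg.tr_smul3,
      add_zero, zero_add, sub_zero, zero_sub, neg_zero, neg_neg, sub_self] <;> abel))
        - hrep.rep3 x y z m + hrep.rep3 x y t w + hrep.rep2 y z t u
        - hrep.rep2 x z t v + hh.ly3 u v w m
  case ly4 =>
    rintro ⟨x,u⟩ ⟨y,v⟩ ⟨z,w⟩ ⟨t,m⟩ ⟨c,n⟩
    refine Prod.ext ?_ ?_
    · simp only [sdBr, sdTr, Prod.mk_add_mk]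
      exact hg.ly4 x y z t c
    · linear_combination (norm := (simp only [sdBr, sdTr, Dmap, hrep.ρ_add, hrep.ρ_addv, hrep.μ_add1, hrep.μ_add2, hrep.μ_addv,
      hh.br_add_left, hh.br_add_right, hh.tr_add1, hh.tr_add2, hh.tr_add3,
      hg.br_add_left, hg.br_add_right,
      rgs, rgn, rg0, rvs, rvn, rv0, m1s, m2s, mvs, mv0, bs1, bs2, b01, b02,
      ts1, ts2, ts3, t01, t02, t03,
      hact.ρ_cent_br, hact.μ_cent_br, zb2ρ, zb2μ,
      hact.ρ_cent_tr1, hact.μ_cent_tr1, zt2ρ, zt2μ,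
      hact.ρ_cent_tr3, hact.μ_cent_tr3,
      hact.ρ_ann_br, hact.ρ_ann_tr, hact.μ_ann_br, hact.μ_ann_tr,
      Prod.mk_add_mk, Prod.fst_zero, Prod.snd_zero, Prod.fst_neg, Prod.snd_neg,
      Prod.neg_mk, Prod.smul_mk, smul_add, smul_sub,
      hrep.ρ_smul, hrep.ρ_smulv, hrep.μ_smul1, hrep.μ_smul2, hrep.μ_smulv,
      hh.br_smul_left, hh.br_smul_right, hh.tr_smul1, hh.tr_smul2, hh.tr_smul3,
      hg.br_smul_left, hg.br_smul_right,
      hg.tr_add1, hg.tr_add2, hg.tr_add3, hg.tr_smul1, hg.tr_smul2, hg.tr_smul3,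
      add_zero, zero_add, sub_zero, zero_sub, neg_zero, neg_neg, sub_self] <;> abel))
        - hrep.rep5 x y t z n + hrep.rep5 x y z t n
        - hrep.rep3 x y z (ρ t n) + congrArg (fun a => ρ t a) (hrep.rep3 x y z n)
        - congrArg (fun a => ρ z a) (hrep.rep3 x y t n) + hrep.rep3 x y t (ρ z n)
        - congrArg (fun a => ρ a n) (hg.ly3 x y z t) + hrep.rep3 x y (brg z t) n
        - hrep.rep5 x y t c w + hrep.rep5 x y z c m
        - hrep.rep4 y z t c u + hrep.rep4 x z t c v
        + hh.ly4 u v w m n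
end

section
/- Let (ρ,μ) be an action of a Lie-Yamaguti algebra g on a Lie-Yamaguti algebra h. A linear map T: h → g is a relative Rota-Baxter operator of weight 1 if and only if the graph Gr(T) = {Tu + u : u ∈ h} is a subalgebra of the semidirect product Lie-Yamaguti algebra g ⋉_{ρ,μ} h. -/
/-- `T` is a relative Rota-Baxter operator of weight 1 iff its graph is a
subalgebra of the semidirect product `g ⋉_{ρ,μ} h`. -/
theorem relRB_iff_graph_subalgebra (K : Type*) [Field K]
    (g : Type*) [AddCommGroup g] [Module K g] (h : Type*) [AddCommGroup h] [Module K h]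
    (brg : g → g → g) (trg : g → g → g → g) (brh : h → h → h) (trh : h → h → h → h)
    (ρ : g → h → h) (μ : g → g → h → h)
    (hg : IsLYA K g brg trg) (hh : IsLYA K h brh trh)
    (hact : IsLYAction K g h brg trg brh trh ρ μ) (T : h →ₗ[K] g) :
    IsRelRB K brg trg brh trh ρ μ T ↔
      ((∀ p q : g × h, p ∈ Set.range (fun u : h => (T u, u)) →
          q ∈ Set.range (fun u : h => (T u, u)) →
          sdBr brg brh ρ p q ∈ Set.range (fun u : h => (T u, u))) ∧
        (∀ p q r : g × h, p ∈ Set.range (fun u : h => (T u, u)) →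
          q ∈ Set.range (fun u : h => (T u, u)) →
          r ∈ Set.range (fun u : h => (T u, u)) →
          sdTr brg trg trh ρ μ p q r ∈ Set.range (fun u : h => (T u, u)))) := by
  constructor
  · rintro ⟨h1, h2⟩
    constructor
    · rintro p q ⟨u, rfl⟩ ⟨v, rfl⟩
      exact ⟨ρ (T u) v - ρ (T v) u + brh u v, by simp [sdBr, h1 u v]⟩
    · rintro p q r ⟨u, rfl⟩ ⟨v, rfl⟩ ⟨w, rfl⟩
      exact ⟨Dmap brg ρ μ (T u) (T v) w + μ (T v) (T w) u - μ (T u) (T w) v + trh u v w,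
        by simp [sdTr, h2 u v w]⟩
  · rintro ⟨h1, h2⟩
    constructor
    · intro u v
      obtain ⟨s, hs⟩ := h1 _ _ ⟨u, rfl⟩ ⟨v, rfl⟩
      have h1' := congrArg Prod.fst hs
      have h2' := congrArg Prod.snd hs
      simp [sdBr] at h1' h2'
      rw [← h2', ← h1']
    · intro u v w
      obtain ⟨s, hs⟩ := h2 _ _ _ ⟨u, rfl⟩ ⟨v, rfl⟩ ⟨w, rfl⟩
      have h1' := congrArg Prod.fst hs
      have h2' := congrArg Prod.snd hs
      simp [sdTr] at h1' h2'
      rw [← h2', ← h1']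
end

section
/- Let T: h → g be a relative Rota-Baxter operator of weight 1 with respect to an action (ρ,μ). Then (h,[·,·]_T,{{·,·,·}}_T) is a Lie-Yamaguti algebra (the descent Lie-Yamaguti algebra), where [u,v]_T := ρ(Tu)v − ρ(Tv)u + [u,v]_h and {{u,v,w}}_T := D(Tu,Tv)w + μ(Tv,Tw)u − μ(Tu,Tw)v + {{u,v,w}}_h; moreover T is a Lie-Yamaguti algebra homomorphism from (h,[·,·]_T,{{·,·,·}}_T) to (g,[·,·]_g,{{·,·,·}}_g). -/
private lemma lin_aux {K V W : Type*} [Field K] [AddCommGroup V] [Module K V]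
    [AddCommGroup W] [Module K W] (f : V → W)
    (hadd : ∀ a b, f (a + b) = f a + f b) (hsmul : ∀ (c : K) (a : V), f (c • a) = c • f a) :
    (f 0 = 0) ∧ (∀ a, f (-a) = -f a) ∧ (∀ a b, f (a - b) = f a - f b) := by
  have h0 : f 0 = 0 := by have := hsmul 0 0; simpa using this
  have hn : ∀ a, f (-a) = -f a := fun a => by
    have := hsmul (-1) a; rwa [neg_one_smul, neg_one_smul] at this
  exact ⟨h0, hn, fun a b => by rw [sub_eq_add_neg, hadd, hn, ← sub_eq_add_neg]⟩

/-- the descent brackets form a Lie-Yamaguti algebra on `h`, and `T` is a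
Lie-Yamaguti algebra homomorphism from the descent algebra to `g`. -/
theorem descent_isLYA_and_hom (K : Type*) [Field K]
    (g : Type*) [AddCommGroup g] [Module K g] (h : Type*) [AddCommGroup h] [Module K h]
    (brg : g → g → g) (trg : g → g → g → g) (brh : h → h → h) (trh : h → h → h → h)
    (ρ : g → h → h) (μ : g → g → h → h)
    (hg : IsLYA K g brg trg) (hh : IsLYA K h brh trh)
    (hact : IsLYAction K g h brg trg brh trh ρ μ) (T : h →ₗ[K] g)
    (hT : IsRelRB K brg trg brh trh ρ μ T) :
    IsLYA K h (brT brh ρ T) (trT brg trh ρ μ T) ∧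
      (∀ u v : h, T (brT brh ρ T u v) = brg (T u) (T v)) ∧
      (∀ u v w : h, T (trT brg trh ρ μ T u v w) = trg (T u) (T v) (T w)) := by
  
  obtain ⟨hT1, hT2⟩ := hT
  have R := hact.rep
  have Tc1 : ∀ u v : h, T (ρ (T u) v - ρ (T v) u + brh u v) = brg (T u) (T v) :=
    fun u v => (hT1 u v).symm
  have Tc2 : ∀ u v w : h,
      T (Dmap brg ρ μ (T u) (T v) w + μ (T v) (T w) u - μ (T u) (T w) v + trh u v w)
        = trg (T u) (T v) (T w) :=
    fun u v w => (hT2 u v w).symm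
  have ρg0 : ∀ v : h, ρ (0 : g) v = 0 := fun v => (lin_aux (fun s : g => ρ s v) (fun a b => R.ρ_add a b v) (fun c a => R.ρ_smul c a v)).1
  have ρgn : ∀ (x : g) (v : h), ρ (-x) v = -ρ x v := fun x v => (lin_aux (fun s : g => ρ s v) (fun a b => R.ρ_add a b v) (fun c a => R.ρ_smul c a v)).2.1 _
  have ρgs : ∀ (x y : g) (v : h), ρ (x - y) v = ρ x v - ρ y v := fun x y v => (lin_aux (fun s : g => ρ s v) (fun a b => R.ρ_add a b v) (fun c a => R.ρ_smul c a v)).2.2 _ _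
  have ρv0 : ∀ x : g, ρ x (0 : h) = 0 := fun x => (lin_aux (fun s : h => ρ x s) (fun a b => R.ρ_addv x a b) (fun c a => R.ρ_smulv x c a)).1
  have ρvn : ∀ (x : g) (v : h), ρ x (-v) = -ρ x v := fun x v => (lin_aux (fun s : h => ρ x s) (fun a b => R.ρ_addv x a b) (fun c a => R.ρ_smulv x c a)).2.1 _
  have ρvs : ∀ (x : g) (u v : h), ρ x (u - v) = ρ x u - ρ x v := fun x u v => (lin_aux (fun s : h => ρ x s) (fun a b => R.ρ_addv x a b) (fun c a => R.ρ_smulv x c a)).2.2 _ _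
  have μ10 : ∀ (y : g) (v : h), μ (0 : g) y v = 0 := fun y v => (lin_aux (fun s : g => μ s y v) (fun a b => R.μ_add1 a b y v) (fun c a => R.μ_smul1 c a y v)).1
  have μ1n : ∀ (x y : g) (v : h), μ (-x) y v = -μ x y v := fun x y v => (lin_aux (fun s : g => μ s y v) (fun a b => R.μ_add1 a b y v) (fun c a => R.μ_smul1 c a y v)).2.1 _
  have μ1s : ∀ (x y' y : g) (v : h), μ (x - y') y v = μ x y v - μ y' y v := fun x y' y v => (lin_aux (fun s : g => μ s y v) (fun a b => R.μ_add1 a b y v) (fun c a => R.μ_smul1 c a y v)).2.2 _ _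
  have μ20 : ∀ (x : g) (v : h), μ x (0 : g) v = 0 := fun x v => (lin_aux (fun s : g => μ x s v) (fun a b => R.μ_add2 x a b v) (fun c a => R.μ_smul2 c x a v)).1
  have μ2n : ∀ (x y : g) (v : h), μ x (-y) v = -μ x y v := fun x y v => (lin_aux (fun s : g => μ x s v) (fun a b => R.μ_add2 x a b v) (fun c a => R.μ_smul2 c x a v)).2.1 _
  have μ2s : ∀ (x y y' : g) (v : h), μ x (y - y') v = μ x y v - μ x y' v := fun x y y' v => (lin_aux (fun s : g => μ x s v) (fun a b => R.μ_add2 x a b v) (fun c a => R.μ_smul2 c x a v)).2.2 _ _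
  have μv0 : ∀ (x y : g), μ x y (0 : h) = 0 := fun x y => (lin_aux (fun s : h => μ x y s) (fun a b => R.μ_addv x y a b) (fun c a => R.μ_smulv x y c a)).1
  have μvn : ∀ (x y : g) (v : h), μ x y (-v) = -μ x y v := fun x y v => (lin_aux (fun s : h => μ x y s) (fun a b => R.μ_addv x y a b) (fun c a => R.μ_smulv x y c a)).2.1 _
  have μvs : ∀ (x y : g) (u v : h), μ x y (u - v) = μ x y u - μ x y v := fun x y u v => (lin_aux (fun s : h => μ x y s) (fun a b => R.μ_addv x y a b) (fun c a => R.μ_smulv x y c a)).2.2 _ _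
  have b0l : ∀ c : h, brh 0 c = 0 := fun c => (lin_aux (fun s : h => brh s c) (fun p q => hh.br_add_left p q c) (fun k p => hh.br_smul_left k p c)).1
  have bnl : ∀ a c : h, brh (-a) c = -brh a c := fun a c => (lin_aux (fun s : h => brh s c) (fun p q => hh.br_add_left p q c) (fun k p => hh.br_smul_left k p c)).2.1 _
  have bsl : ∀ a b c : h, brh (a - b) c = brh a c - brh b c := fun a b c => (lin_aux (fun s : h => brh s c) (fun p q => hh.br_add_left p q c) (fun k p => hh.br_smul_left k p c)).2.2 _ _
  have b0r : ∀ c : h, brh c 0 = 0 := fun c => (lin_aux (fun s : h => brh c s) (fun p q => hh.br_add_right c p q) (fun k p => hh.br_smul_right k c p)).1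
  have bnr : ∀ a c : h, brh c (-a) = -brh c a := fun a c => (lin_aux (fun s : h => brh c s) (fun p q => hh.br_add_right c p q) (fun k p => hh.br_smul_right k c p)).2.1 _
  have bsr : ∀ c a b : h, brh c (a - b) = brh c a - brh c b := fun c a b => (lin_aux (fun s : h => brh c s) (fun p q => hh.br_add_right c p q) (fun k p => hh.br_smul_right k c p)).2.2 _ _
  have t01 : ∀ y z : h, trh 0 y z = 0 := fun y z => (lin_aux (fun s : h => trh s y z) (fun p q => hh.tr_add1 p q y z) (fun k p => hh.tr_smul1 k p y z)).1
  have tn1 : ∀ a y z : h, trh (-a) y z = -trh a y z := fun a y z => (lin_aux (fun s : h => trh s y z) (fun p q => hh.tr_add1 p q y z) (fun k p => hh.tr_smul1 k p y z)).2.1 _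
  have ts1 : ∀ a b y z : h, trh (a - b) y z = trh a y z - trh b y z := fun a b y z => (lin_aux (fun s : h => trh s y z) (fun p q => hh.tr_add1 p q y z) (fun k p => hh.tr_smul1 k p y z)).2.2 _ _
  have t02 : ∀ x z : h, trh x 0 z = 0 := fun x z => (lin_aux (fun s : h => trh x s z) (fun p q => hh.tr_add2 x p q z) (fun k p => hh.tr_smul2 k x p z)).1
  have tn2 : ∀ x a z : h, trh x (-a) z = -trh x a z := fun x a z => (lin_aux (fun s : h => trh x s z) (fun p q => hh.tr_add2 x p q z) (fun k p => hh.tr_smul2 k x p z)).2.1 _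
  have ts2 : ∀ x a b z : h, trh x (a - b) z = trh x a z - trh x b z := fun x a b z => (lin_aux (fun s : h => trh x s z) (fun p q => hh.tr_add2 x p q z) (fun k p => hh.tr_smul2 k x p z)).2.2 _ _
  have t03 : ∀ x y : h, trh x y 0 = 0 := fun x y => (lin_aux (fun s : h => trh x y s) (fun p q => hh.tr_add3 x y p q) (fun k p => hh.tr_smul3 k x y p)).1
  have tn3 : ∀ x y a : h, trh x y (-a) = -trh x y a := fun x y a => (lin_aux (fun s : h => trh x y s) (fun p q => hh.tr_add3 x y p q) (fun k p => hh.tr_smul3 k x y p)).2.1 _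
  have ts3 : ∀ x y a b : h, trh x y (a - b) = trh x y a - trh x y b := fun x y a b => (lin_aux (fun s : h => trh x y s) (fun p q => hh.tr_add3 x y p q) (fun k p => hh.tr_smul3 k x y p)).2.2 _ _
  have cbρr : ∀ (x : g) (u v : h), brh v (ρ x u) = 0 := fun x u v => by
    rw [hh.br_skew, hact.ρ_cent_br, neg_zero]
  have cbμr : ∀ (x y : g) (u v : h), brh v (μ x y u) = 0 := fun x y u v => by
    rw [hh.br_skew, hact.μ_cent_br, neg_zero]
  have ctρ2 : ∀ (x : g) (u v w : h), trh v (ρ x u) w = 0 := fun x u v w => by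
    rw [hh.tr_skew, hact.ρ_cent_tr1, neg_zero]
  have ctμ2 : ∀ (x y : g) (u v w : h), trh v (μ x y u) w = 0 := fun x y u v w => by
    rw [hh.tr_skew, hact.μ_cent_tr1, neg_zero]
  refine ⟨⟨fun x y z => by simp only [trT, brT, Dmap, map_add, hg.br_add_left, hg.br_add_right, R.ρ_add, R.ρ_addv, R.μ_add1, R.μ_add2, R.μ_addv, hh.br_add_left, hh.br_add_right, hh.tr_add1, hh.tr_add2, hh.tr_add3]; abel,
    fun a x y => by simp only [trT, brT, Dmap, map_smul, hg.br_smul_left, hg.br_smul_right, R.ρ_smul, R.ρ_smulv, R.μ_smul1, R.μ_smul2, R.μ_smulv, hh.br_smul_left, hh.br_smul_right, hh.tr_smul1, hh.tr_smul2, hh.tr_smul3]; module,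
    fun x y z => by simp only [trT, brT, Dmap, map_add, hg.br_add_left, hg.br_add_right, R.ρ_add, R.ρ_addv, R.μ_add1, R.μ_add2, R.μ_addv, hh.br_add_left, hh.br_add_right, hh.tr_add1, hh.tr_add2, hh.tr_add3]; abel,
    fun a x y => by simp only [trT, brT, Dmap, map_smul, hg.br_smul_left, hg.br_smul_right, R.ρ_smul, R.ρ_smulv, R.μ_smul1, R.μ_smul2, R.μ_smulv, hh.br_smul_left, hh.br_smul_right, hh.tr_smul1, hh.tr_smul2, hh.tr_smul3]; module,
    fun x x' y z => by simp only [trT, brT, Dmap, map_add, hg.br_add_left, hg.br_add_right, R.ρ_add, R.ρ_addv, R.μ_add1, R.μ_add2, R.μ_addv, hh.br_add_left, hh.br_add_right, hh.tr_add1, hh.tr_add2, hh.tr_add3]; abel,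
    fun a x y z => by simp only [trT, brT, Dmap, map_smul, hg.br_smul_left, hg.br_smul_right, R.ρ_smul, R.ρ_smulv, R.μ_smul1, R.μ_smul2, R.μ_smulv, hh.br_smul_left, hh.br_smul_right, hh.tr_smul1, hh.tr_smul2, hh.tr_smul3]; module,
    fun x y y' z => by simp only [trT, brT, Dmap, map_add, hg.br_add_left, hg.br_add_right, R.ρ_add, R.ρ_addv, R.μ_add1, R.μ_add2, R.μ_addv, hh.br_add_left, hh.br_add_right, hh.tr_add1, hh.tr_add2, hh.tr_add3]; abel,
    fun a x y z => by simp only [trT, brT, Dmap, map_smul, hg.br_smul_left, hg.br_smul_right, R.ρ_smul, R.ρ_smulv, R.μ_smul1, R.μ_smul2, R.μ_smulv, hh.br_smul_left, hh.br_smul_right, hh.tr_smul1, hh.tr_smul2, hh.tr_smul3]; module,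
    fun x y z z' => by simp only [trT, brT, Dmap, map_add, hg.br_add_left, hg.br_add_right, R.ρ_add, R.ρ_addv, R.μ_add1, R.μ_add2, R.μ_addv, hh.br_add_left, hh.br_add_right, hh.tr_add1, hh.tr_add2, hh.tr_add3]; abel,
    fun a x y z => by simp only [trT, brT, Dmap, map_smul, hg.br_smul_left, hg.br_smul_right, R.ρ_smul, R.ρ_smulv, R.μ_smul1, R.μ_smul2, R.μ_smulv, hh.br_smul_left, hh.br_smul_right, hh.tr_smul1, hh.tr_smul2, hh.tr_smul3]; module,
    fun x y => by
      simp only [brT, trT, Tc1, Tc2]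
      linear_combination (norm := ((try simp only [Dmap, R.ρ_add, R.ρ_addv, R.μ_add1, R.μ_add2, R.μ_addv, hh.br_add_left, hh.br_add_right, hh.tr_add1, hh.tr_add2, hh.tr_add3, ρg0, ρgn, ρgs, ρv0, ρvn, ρvs, μ10, μ1n, μ1s, μ20, μ2n, μ2s, μv0, μvn, μvs, b0l, bnl, bsl, b0r, bnr, bsr, t01, tn1, ts1, t02, tn2, ts2, t03, tn3, ts3, hact.ρ_cent_br, hact.ρ_cent_tr1, hact.ρ_cent_tr3, hact.μ_cent_br, hact.μ_cent_tr1, hact.μ_cent_tr3, hact.ρ_ann_br, hact.ρ_ann_tr, hact.μ_ann_br, hact.μ_ann_tr, cbρr, cbμr, ctρ2, ctμ2]); abel)) hh.br_skew x y,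
    fun x y z => by
      simp only [brT, trT, Tc1, Tc2]
      linear_combination (norm := ((try simp only [Dmap, R.ρ_add, R.ρ_addv, R.μ_add1, R.μ_add2, R.μ_addv, hh.br_add_left, hh.br_add_right, hh.tr_add1, hh.tr_add2, hh.tr_add3, ρg0, ρgn, ρgs, ρv0, ρvn, ρvs, μ10, μ1n, μ1s, μ20, μ2n, μ2s, μv0, μvn, μvs, b0l, bnl, bsl, b0r, bnr, bsr, t01, tn1, ts1, t02, tn2, ts2, t03, tn3, ts3, hact.ρ_cent_br, hact.ρ_cent_tr1, hact.ρ_cent_tr3, hact.μ_cent_br, hact.μ_cent_tr1, hact.μ_cent_tr3, hact.ρ_ann_br, hact.ρ_ann_tr, hact.μ_ann_br, hact.μ_ann_tr, cbρr, cbμr, ctρ2, ctμ2]); abel)) -(congrArg (fun s => ρ s z) (hg.br_skew (T x) (T y))) + hh.tr_skew x y z,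
    fun x y z => by
      simp only [brT, trT, Tc1, Tc2]
      linear_combination (norm := ((try simp only [Dmap, R.ρ_add, R.ρ_addv, R.μ_add1, R.μ_add2, R.μ_addv, hh.br_add_left, hh.br_add_right, hh.tr_add1, hh.tr_add2, hh.tr_add3, ρg0, ρgn, ρgs, ρv0, ρvn, ρvs, μ10, μ1n, μ1s, μ20, μ2n, μ2s, μv0, μvn, μvs, b0l, bnl, bsl, b0r, bnr, bsr, t01, tn1, ts1, t02, tn2, ts2, t03, tn3, ts3, hact.ρ_cent_br, hact.ρ_cent_tr1, hact.ρ_cent_tr3, hact.μ_cent_br, hact.μ_cent_tr1, hact.μ_cent_tr3, hact.ρ_ann_br, hact.ρ_ann_tr, hact.μ_ann_br, hact.μ_ann_tr, cbρr, cbμr, ctρ2, ctμ2]); abel)) hh.ly1 x y z,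
    fun x y z w => by
      simp only [brT, trT, Tc1, Tc2]
      linear_combination (norm := ((try simp only [Dmap, R.ρ_add, R.ρ_addv, R.μ_add1, R.μ_add2, R.μ_addv, hh.br_add_left, hh.br_add_right, hh.tr_add1, hh.tr_add2, hh.tr_add3, ρg0, ρgn, ρgs, ρv0, ρvn, ρvs, μ10, μ1n, μ1s, μ20, μ2n, μ2s, μv0, μvn, μvs, b0l, bnl, bsl, b0r, bnr, bsr, t01, tn1, ts1, t02, tn2, ts2, t03, tn3, ts3, hact.ρ_cent_br, hact.ρ_cent_tr1, hact.ρ_cent_tr3, hact.μ_cent_br, hact.μ_cent_tr1, hact.μ_cent_tr3, hact.ρ_ann_br, hact.ρ_ann_tr, hact.μ_ann_br, hact.μ_ann_tr, cbρr, cbμr, ctρ2, ctμ2]); abel)) R.rep2 (T z) (T x) (T y) w - R.rep1 (T x) (T y) (T z) w - R.rep1 (T x) (T y) (T w) z + R.rep2 (T x) (T y) (T z) w - R.rep1 (T y) (T z) (T x) w - R.rep1 (T y) (T z) (T w) x + R.rep2 (T y) (T z) (T x) w - R.rep1 (T z) (T x) (T y) w - R.rep1 (T z) (T x) (T w) y -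 congrArg (fun s => ρ s w) (hg.ly1 (T x) (T y) (T z)) + R.rep3 (T x) (T y) (T z) w + R.rep3 (T y) (T z) (T x) w + R.rep3 (T z) (T x) (T y) w + hh.ly2 x y z w,
    fun x y z w => by
      simp only [brT, trT, Tc1, Tc2]
      linear_combination (norm := ((try simp only [Dmap, R.ρ_add, R.ρ_addv, R.μ_add1, R.μ_add2, R.μ_addv, hh.br_add_left, hh.br_add_right, hh.tr_add1, hh.tr_add2, hh.tr_add3, ρg0, ρgn, ρgs, ρv0, ρvn, ρvs, μ10, μ1n, μ1s, μ20, μ2n, μ2s, μv0, μvn, μvs, b0l, bnl, bsl, b0r, bnr, bsr, t01, tn1, ts1, t02, tn2, ts2, t03, tn3, ts3, hact.ρ_cent_br, hact.ρ_cent_tr1, hact.ρ_cent_tr3, hact.μ_cent_br, hact.μ_cent_tr1, hact.μ_cent_tr3, hact.ρ_ann_br, hact.ρ_ann_tr, hact.μ_ann_br, hact.μ_ann_tr, cbρr, cbμr, ctρ2, ctμ2]); abel)) R.rep2 (T y) (T z) (T w) x - R.rep2 (T x) (T z) (T w) y - R.rep3 (T x) (T y) (T z) w + R.rep3 (T x)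 (T y) (T w) z + hh.ly3 x y z w,
    fun x y z w t => by
      simp only [brT, trT, Tc1, Tc2]
      linear_combination (norm := ((try simp only [Dmap, R.ρ_add, R.ρ_addv, R.μ_add1, R.μ_add2, R.μ_addv, hh.br_add_left, hh.br_add_right, hh.tr_add1, hh.tr_add2, hh.tr_add3, ρg0, ρgn, ρgs, ρv0, ρvn, ρvs, μ10, μ1n, μ1s, μ20, μ2n, μ2s, μv0, μvn, μvs, b0l, bnl, bsl, b0r, bnr, bsr, t01, tn1, ts1, t02, tn2, ts2, t03, tn3, ts3, hact.ρ_cent_br, hact.ρ_cent_tr1, hact.ρ_cent_tr3, hact.μ_cent_br, hact.μ_cent_tr1, hact.μ_cent_tr3, hact.ρ_ann_br, hact.ρ_ann_tr, hact.μ_ann_br, hact.μ_ann_tr, cbρr, cbμr, ctρ2, ctμ2]); abel)) -(R.rep4 (T y) (T z) (T w) (T t) x) + R.rep4 (T x) (T z) (T w) (T t) y - R.rep3 (T x) (T y) (T z) (ρ (T w) t) + congrArg (fun s => ρ (T w) (s)) (R.rep3 (T x) (T y) (T z) t) - congrArg (fun s => ρ (T z) (s)) (R.rep3 (T x) (T y)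 (T w) t) + R.rep3 (T x) (T y) (T w) (ρ (T z) t) + R.rep5 (T x) (T y) (T z) (T w) t + R.rep5 (T x) (T y) (T z) (T t) w - R.rep5 (T x) (T y) (T w) (T z) t - R.rep5 (T x) (T y) (T w) (T t) z - congrArg (fun s => ρ s t) (hg.ly3 (T x) (T y) (T z) (T w)) + R.rep3 (T x) (T y) (brg (T z) (T w)) t + hh.ly4 x y z w t⟩, fun u v => (hT1 u v).symm, fun u v w => (hT2 u v w).symm⟩
end

section
/- Let T: h → g be a relative Rota-Baxter operator of weight 1 with respect to an action (ρ,μ). Define ρ_T: h → gl(g) by ρ_T(u)(x) = [Tu,x]_g + T(ρ(x)u), μ_T: h⊗h → gl(g) by μ_T(u,v)(x) = {{x,Tu,Tv}}_g − T(D(x,Tu)v − μ(x,Tv)u), and D_T: h∧h → gl(g) by D_T(u,v)(x) = {{Tu,Tv,x}}_g − T(μ(Tv,x)u − μ(Tu,x)v). Then D_T = D_{ρ_T,μ_T}, i.e., D_T(u,v) = μ_T(v,u) − μ_T(u,v) + [ρ_T(u),ρ_T(v)] − ρ_T([u,v]_T). -/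
/-- `D_T = D_{ρ_T, μ_T}` for the induced maps of a relative Rota-Baxter
operator of weight 1. -/
theorem DT_eq_Dmap (K : Type*) [Field K]
    (g : Type*) [AddCommGroup g] [Module K g] (h : Type*) [AddCommGroup h] [Module K h]
    (brg : g → g → g) (trg : g → g → g → g) (brh : h → h → h) (trh : h → h → h → h)
    (ρ : g → h → h) (μ : g → g → h → h)
    (hg : IsLYA K g brg trg) (hh : IsLYA K h brh trh)
    (hact : IsLYAction K g h brg trg brh trh ρ μ) (T : h →ₗ[K] g)
    (hT : IsRelRB K brg trg brh trh ρ μ T) :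
    ∀ (u v : h) (x : g),
      DT trg μ T u v x
        = Dmap (brT brh ρ T) (rhoT brg ρ T) (muT brg trg ρ μ T) u v x := by

  intro u v x
  obtain ⟨hbr, htr⟩ := hT
  have R := hact.rep
  -- helper linearity/negation lemmas
  have ρneg1 : ∀ (y : g) (w : h), ρ (-y) w = - ρ y w := by
    intro y w
    have := R.ρ_smul (-1 : K) y w; simpa using this
  have ρnegv : ∀ (y : g) (w : h), ρ y (-w) = - ρ y w := by
    intro y w
    have := R.ρ_smulv y (-1 : K) w; simpa using this
  have ρsub1 : ∀ (y z : g) (w : h), ρ (y - z) w = ρ y w - ρ z w := by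
    intro y z w
    rw [sub_eq_add_neg, R.ρ_add, ρneg1, ← sub_eq_add_neg]
  have ρsubv : ∀ (y : g) (w w' : h), ρ y (w - w') = ρ y w - ρ y w' := by
    intro y w w'
    rw [sub_eq_add_neg, R.ρ_addv, ρnegv, ← sub_eq_add_neg]
  have brgneg : ∀ p q : g, brg (-p) q = - brg p q := by
    intro p q
    have := hg.br_smul_left (-1 : K) p q; simpa using this
  have brh0 : ∀ (y : g) (p q : h), brh p (ρ y q) = 0 := by
    intro y p q
    rw [hh.br_skew, hact.ρ_cent_br, neg_zero]
  -- key pure Lie-Yamaguti identity on g, from ly1 and skew-symmetries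
  have key : trg (T u) (T v) x
      = trg x (T v) (T u) - trg x (T u) (T v) + brg (T u) (brg (T v) x)
        - brg (T v) (brg (T u) x) - brg (brg (T u) (T v)) x := by
    have h1 := hg.ly1 (T u) (T v) x
    have e1 : brg (brg (T v) x) (T u) = - brg (T u) (brg (T v) x) := hg.br_skew _ _
    have e2 : brg (brg x (T u)) (T v) = brg (T v) (brg (T u) x) := by
      rw [hg.br_skew x (T u), brgneg, hg.br_skew, neg_neg]
    have e3 : trg (T v) x (T u) = - trg x (T v) (T u) := hg.tr_skew _ _ _
    rw [e1, e2, e3] at h1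
    linear_combination (norm := abel) h1
  -- expand both sides
  simp only [DT, Dmap, muT, rhoT, brT]
  rw [← hbr u v]
  rw [hg.br_add_right (T u) (brg (T v) x) (T (ρ x v)),
      hg.br_add_right (T v) (brg (T u) x) (T (ρ x u)),
      hbr u (ρ x v), hbr v (ρ x u)]
  rw [show brg x (T v) = - brg (T v) x from hg.br_skew _ _,
      show brg x (T u) = - brg (T u) x from hg.br_skew _ _]
  simp only [R.ρ_add, ρsub1, R.ρ_addv, ρsubv, ρneg1, ρnegv, brh0,
    hact.ρ_ann_br, map_add, map_sub, map_zero, map_neg,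
    add_zero, zero_add, sub_zero, neg_zero]
  rw [key]
  abel
end

section
/- Let T, T' be relative Rota-Baxter operators of weight 1 from h to g with respect to an action (ρ,μ), and let (ψ_g,ψ_h) be a homomorphism from T' to T. Then ψ_g intertwines the induced representations: ψ_g ∘ ρ_{T'}(u) = ρ_T(ψ_h(u)) ∘ ψ_g and ψ_g ∘ μ_{T'}(u,v) = μ_T(ψ_h(u),ψ_h(v)) ∘ ψ_g for all u,v ∈ h. -/
/-- a homomorphism `(ψg, ψh)` from `T'` to `T` intertwines the induced
representations: `ψg ∘ ρ_{T'}(u) = ρ_T(ψh u) ∘ ψg` and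
`ψg ∘ μ_{T'}(u,v) = μ_T(ψh u, ψh v) ∘ ψg`. -/
theorem hom_intertwines_induced_reps (K : Type*) [Field K]
    (g : Type*) [AddCommGroup g] [Module K g] (h : Type*) [AddCommGroup h] [Module K h]
    (brg : g → g → g) (trg : g → g → g → g) (brh : h → h → h) (trh : h → h → h → h)
    (ρ : g → h → h) (μ : g → g → h → h)
    (hg : IsLYA K g brg trg) (hh : IsLYA K h brh trh)
    (hact : IsLYAction K g h brg trg brh trh ρ μ)
    (T T' : h →ₗ[K] g)
    (hT : IsRelRB K brg trg brh trh ρ μ T) (hT' : IsRelRB K brg trg brh trh ρ μ T')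
    (ψg : g →ₗ[K] g) (ψh : h →ₗ[K] h)
    (hψg_br : ∀ x y : g, ψg (brg x y) = brg (ψg x) (ψg y))
    (hψg_tr : ∀ x y z : g, ψg (trg x y z) = trg (ψg x) (ψg y) (ψg z))
    (hψh_br : ∀ u v : h, ψh (brh u v) = brh (ψh u) (ψh v))
    (hψh_tr : ∀ u v w : h, ψh (trh u v w) = trh (ψh u) (ψh v) (ψh w))
    (hcomm : ∀ u : h, ψg (T' u) = T (ψh u))
    (hρ : ∀ (x : g) (u : h), ψh (ρ x u) = ρ (ψg x) (ψh u))
    (hμ : ∀ (x y : g) (u : h), ψh (μ x y u) = μ (ψg x) (ψg y) (ψh u)) :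
    (∀ (u : h) (x : g), ψg (rhoT brg ρ T' u x) = rhoT brg ρ T (ψh u) (ψg x)) ∧
    (∀ (u v : h) (x : g),
      ψg (muT brg trg ρ μ T' u v x) = muT brg trg ρ μ T (ψh u) (ψh v) (ψg x)) := by
  have hD : ∀ (x y : g) (v : h),
      ψh (Dmap brg ρ μ x y v) = Dmap brg ρ μ (ψg x) (ψg y) (ψh v) := by
    intro x y v
    simp [Dmap, map_sub, map_add, hρ, hμ, hψg_br]
  constructor
  · intro u x
    simp [rhoT, map_add, hψg_br, hcomm, hρ]
  · intro u v x
    simp [muT, map_sub, hψg_tr, hcomm, hD, hρ, hμ]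
end
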